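/- Let A ∈ ℝ^{n×m} (m ≤ n) and let B ∈ ℝ^{ℓ×m} be the output of Frequent Directions run on A with ℓ rows, so that for every unit vector x̄ ∈ ℝ^m, ‖Ax̄‖² - ‖Bx̄‖² ≤ ‖A - A_k‖_F²/(ℓ - k) for all k < ℓ. Then for any unit vector y ∈ ℝⁿ with ‖yᵀAB†B‖ = 0, one has ‖yᵀA‖² ≤ ‖A - A_k‖_F²/(ℓ - k) for all k < ℓ (including k = 0 with A₀ = 0). -/

import Mathlib

open Matrix BigOperators MeasureTheory

/-- Euclidean norm of a vector in `ℝⁿ`. -/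
noncomputable def eunorm {n : ℕ} (x : Fin n → ℝ) : ℝ := Real.sqrt (∑ i, (x i) ^ 2)

/-- Spectral (operator) norm of a real matrix: supremum of `‖A x‖` over unit vectors `x`. -/
noncomputable def specNorm {n m : ℕ} (A : Matrix (Fin n) (Fin m) ℝ) : ℝ :=
  sSup {c : ℝ | ∃ x : Fin m → ℝ, eunorm x = 1 ∧ c = eunorm (A.mulVec x)}

/-- Frobenius norm of a real matrix. -/
noncomputable def frobNorm {n m : ℕ} (A : Matrix (Fin n) (Fin m) ℝ) : ℝ :=
  Real.sqrt (∑ i, ∑ j, (A i j) ^ 2)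

/-- The four Penrose conditions: `Ad` is the Moore–Penrose pseudoinverse of `A`. -/
def IsMoorePenrose {n m : ℕ} (A : Matrix (Fin n) (Fin m) ℝ)
    (Ad : Matrix (Fin m) (Fin n) ℝ) : Prop :=
  A * Ad * A = A ∧ Ad * A * Ad = Ad ∧ (A * Ad)ᵀ = A * Ad ∧ (Ad * A)ᵀ = Ad * A

/-- `Ak` is a best rank-`k` approximation of `A` in Frobenius norm. -/
def IsBestRankApprox {n m : ℕ} (k : ℕ) (A Ak : Matrix (Fin n) (Fin m) ℝ) : Prop :=
  Ak.rank ≤ k ∧ ∀ C : Matrix (Fin n) (Fin m) ℝ, C.rank ≤ k → frobNorm (A - Ak) ≤ frobNorm (A - C)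


lemma eunorm_nonneg {n : ℕ} (x : Fin n → ℝ) : 0 ≤ eunorm x := Real.sqrt_nonneg _

lemma eunorm_sq {n : ℕ} (x : Fin n → ℝ) : (eunorm x) ^ 2 = ∑ i, (x i) ^ 2 := by
  rw [eunorm, Real.sq_sqrt]
  positivity

lemma eunorm_eq_zero {n : ℕ} {x : Fin n → ℝ} (h : eunorm x = 0) : x = 0 := by
  have h2 : ∑ i, (x i) ^ 2 = 0 := by
    have h3 := eunorm_sq x
    rw [h] at h3
    simpa using h3.symm
  funext i
  have h4 := (Finset.sum_eq_zero_iff_of_nonneg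
    (fun i _ => sq_nonneg (x i))).mp h2 i (Finset.mem_univ i)
  have : x i = 0 := by nlinarith [sq_nonneg (x i)]
  simpa using this

lemma eunorm_smul {n : ℕ} (a : ℝ) (x : Fin n → ℝ) : eunorm (a • x) = |a| * eunorm x := by
  simp only [eunorm, Pi.smul_apply, smul_eq_mul, mul_pow]
  rw [← Finset.mul_sum, Real.sqrt_mul (sq_nonneg a), Real.sqrt_sq_eq_abs]

/-- If `B` satisfies the Frequent Directions guarantee for `A` (for every unit
`x̄` and `k < ℓ`, `‖Ax̄‖² - ‖Bx̄‖² ≤ ‖A - A_k‖_F²/(ℓ - k)`), then for every unit `y ∈ ℝⁿ` with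
`‖yᵀAB†B‖ = 0`, `‖yᵀA‖² ≤ ‖A - A_k‖_F²/(ℓ - k)` for all `k < ℓ`. -/
theorem fd_left_null_space {n m ℓ : ℕ} (hmn : m ≤ n)
    (A : Matrix (Fin n) (Fin m) ℝ) (B : Matrix (Fin ℓ) (Fin m) ℝ)
    (Bd : Matrix (Fin m) (Fin ℓ) ℝ) (hBd : IsMoorePenrose B Bd)
    (hFD : ∀ x : Fin m → ℝ, eunorm x = 1 → ∀ k < ℓ,
      ∀ Ak : Matrix (Fin n) (Fin m) ℝ, IsBestRankApprox k A Ak →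
        (eunorm (A.mulVec x)) ^ 2 - (eunorm (B.mulVec x)) ^ 2 ≤
          (frobNorm (A - Ak)) ^ 2 / ((ℓ : ℝ) - k))
    (y : Fin n → ℝ) (hy : eunorm y = 1)
    (hnull : eunorm (Matrix.vecMul y (A * Bd * B)) = 0) :
    ∀ k < ℓ, ∀ Ak : Matrix (Fin n) (Fin m) ℝ, IsBestRankApprox k A Ak →
      (eunorm (Matrix.vecMul y A)) ^ 2 ≤ (frobNorm (A - Ak)) ^ 2 / ((ℓ : ℝ) - k) := by
  intro k hk Ak hAk
  set z := Matrix.vecMul y A with hz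
  have hlk : (0:ℝ) < (ℓ : ℝ) - k := by
    have : (k:ℝ) < (ℓ:ℝ) := by exact_mod_cast hk
    linarith
  by_cases hz0 : eunorm z = 0
  · rw [hz0]
    have : (0:ℝ) ≤ (frobNorm (A - Ak)) ^ 2 / ((ℓ : ℝ) - k) :=
      div_nonneg (sq_nonneg _) hlk.le
    simpa using this
  · have hc : 0 < eunorm z := lt_of_le_of_ne (eunorm_nonneg z) (Ne.symm hz0)
    set c := eunorm z with hcdef
    set x : Fin m → ℝ := c⁻¹ • z with hx
    have hxnorm : eunorm x = 1 := by
      rw [hx, eunorm_smul, abs_of_pos (inv_pos.mpr hc)]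
      field_simp
      exact hcdef.symm
    -- the projection of z onto the row space of B is zero
    have h0 : Matrix.vecMul y (A * Bd * B) = 0 := eunorm_eq_zero hnull
    have hvz : Matrix.vecMul z (Bd * B) = 0 := by
      rw [hz, Matrix.vecMul_vecMul, ← Matrix.mul_assoc]
      exact h0
    have hBz : B.mulVec z = 0 := by
      have h1 : (Bd * B).mulVec z = 0 := by
        rw [← hBd.2.2.2, Matrix.mulVec_transpose, hvz]
      calc B.mulVec z = (B * (Bd * B)).mulVec z := by
            rw [← Matrix.mul_assoc, hBd.1]
        _ = B.mulVec ((Bd * B).mulVec z) := by rw [← Matrix.mulVec_mulVec]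
        _ = 0 := by rw [h1, Matrix.mulVec_zero]
    have hBx : B.mulVec x = 0 := by
      rw [hx, Matrix.mulVec_smul, hBz, smul_zero]
    have hBxnorm : eunorm (B.mulVec x) = 0 := by
      rw [hBx]
      simp [eunorm]
    -- the key inner product computation
    have hdot : y ⬝ᵥ A.mulVec x = c := by
      rw [Matrix.dotProduct_mulVec, ← hz, hx, dotProduct_smul, smul_eq_mul]
      have hzz : z ⬝ᵥ z = c ^ 2 := by
        rw [hcdef, eunorm_sq]
        simp [dotProduct, pow_two]
      rw [hzz]
      field_simp [pow_two]
    -- Cauchy-Schwarz: c ≤ ‖A x‖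
    have hcs : c ^ 2 ≤ (eunorm (A.mulVec x)) ^ 2 := by
      have h1 : (∑ i, y i * (A.mulVec x) i) ^ 2 ≤
          (∑ i, (y i) ^ 2) * (∑ i, ((A.mulVec x) i) ^ 2) :=
        Finset.sum_mul_sq_le_sq_mul_sq Finset.univ y (A.mulVec x)
      have hy2 : ∑ i, (y i) ^ 2 = 1 := by
        have := eunorm_sq y
        rw [hy] at this
        simpa using this.symm
      have hdot2 : ∑ i, y i * (A.mulVec x) i = c := hdot
      rw [hdot2, hy2, one_mul, ← eunorm_sq] at h1
      exact h1
    have hmain := hFD x hxnorm k hk Ak hAk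
    rw [hBxnorm] at hmain
    simp only [ne_eq, OfNat.ofNat_ne_zero, not_false_eq_true, zero_pow] at hmain
    calc (eunorm z) ^ 2 = c ^ 2 := by rw [hcdef]
      _ ≤ (eunorm (A.mulVec x)) ^ 2 := hcs
      _ ≤ (frobNorm (A - Ak)) ^ 2 / ((ℓ : ℝ) - k) := by linarith
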